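/- Let A = ({a,b,c}, Q, δ) be a weakly acyclic automaton with n = |Q| states and let R = { q ∈ Q : δ(q, a) = q and δ(q, b) = q }. Then A has a synchronizing word belonging to the language (a+b)*cc* (i.e., a word of the form u c^{j} with u ∈ {a,b}* and j ≥ 1) if and only if there exists an integer i with 0 ≤ i ≤ n such that δ(R, c^{i+1}) is a singleton. -/

import Mathlib

/-- A three-letter alphabet `{a, b, c}`. -/
inductive ABC : Type
  | a | b | c
  deriving DecidableEq

instance : Fintype ABC where
  elems := {ABC.a, ABC.b, ABC.c}
  complete := fun x => by cases x <;> simp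

/-- The transition function extended to words: `δ*(q, u)`. -/
def deltaStar {Q A : Type*} (δ : Q → A → Q) (q : Q) (u : List A) : Q :=
  u.foldl δ q

/-- A complete deterministic semi-automaton is weakly acyclic if all simple
cycles are self-loops. -/
def WeaklyAcyclic {Q A : Type*} (δ : Q → A → Q) : Prop :=
  ∀ (q : Q) (u : List A), u ≠ [] → deltaStar δ q u = q → ∀ x ∈ u, δ q x = q

lemma deltaStar_append {Q A : Type*} (δ : Q → A → Q) (p : Q) (u v : List A) :
    deltaStar δ p (u ++ v) = deltaStar δ (deltaStar δ p u) v :=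
  List.foldl_append ..

lemma deltaStar_replicate {Q A : Type*} (δ : Q → A → Q) (p : Q) (k : ℕ) (x : A) :
    deltaStar δ p (List.replicate k x) = (fun q => δ q x)^[k] p := by
  induction k generalizing p with
  | zero => rfl
  | succ k ih =>
    rw [List.replicate_succ]
    show deltaStar δ (δ p x) (List.replicate k x) = _
    rw [ih, Function.iterate_succ_apply]

/-- The word `(ab)^k`. -/
def abWord : ℕ → List ABC
  | 0 => []
  | k+1 => ABC.a :: ABC.b :: abWord k

lemma abWord_mem : ∀ k, ∀ x ∈ abWord k, x = ABC.a ∨ x = ABC.b := by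
  intro k
  induction k with
  | zero => intro x hx; simp [abWord] at hx
  | succ k ih =>
    intro x hx
    simp only [abWord, List.mem_cons] at hx
    rcases hx with h | h | h
    · exact Or.inl h
    · exact Or.inr h
    · exact ih x h

lemma deltaStar_abWord {Q : Type*} (δ : Q → ABC → Q) (p : Q) (k : ℕ) :
    deltaStar δ p (abWord k) = (fun q => δ (δ q ABC.a) ABC.b)^[k] p := by
  induction k generalizing p with
  | zero => rfl
  | succ k ih =>
    show deltaStar δ (δ (δ p ABC.a) ABC.b) (abWord k) = _
    rw [ih, Function.iterate_succ_apply]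

/-- An iteration whose cycles force fixed points stabilizes within `card Q` steps. -/
lemma iterate_fix {Q : Type*} [Fintype Q] (g : Q → Q)
    (hg : ∀ q k, 1 ≤ k → g^[k] q = q → g q = q) (q : Q) :
    g (g^[Fintype.card Q] q) = g^[Fintype.card Q] q := by
  have hni : ¬ Function.Injective (fun i : Fin (Fintype.card Q + 1) => g^[(i : ℕ)] q) := by
    intro hinj
    have := Fintype.card_le_of_injective _ hinj
    simp at this
  rw [Function.Injective] at hni
  push_neg at hni
  obtain ⟨i, j, hij, hne⟩ := hni
  -- wlog i < j
  have key : ∀ i j : Fin (Fintype.card Q + 1), (i : ℕ) < (j : ℕ) →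
      g^[(i : ℕ)] q = g^[(j : ℕ)] q →
      g (g^[Fintype.card Q] q) = g^[Fintype.card Q] q := by
    intro i j hlt heq
    have hfix : g (g^[(i : ℕ)] q) = g^[(i : ℕ)] q := by
      apply hg _ ((j : ℕ) - (i : ℕ)) (by omega)
      rw [← Function.iterate_add_apply]
      rw [show (j : ℕ) - (i : ℕ) + (i : ℕ) = (j : ℕ) by omega]
      exact heq.symm
    have hstab : g^[Fintype.card Q] q = g^[(i : ℕ)] q := by
      have hle : (i : ℕ) ≤ Fintype.card Q := by omega
      conv_lhs => rw [show Fintype.card Q = (Fintype.card Q - (i : ℕ)) + (i : ℕ) by omega,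
        Function.iterate_add_apply]
      exact Function.iterate_fixed hfix _
    rw [hstab]; exact hfix
  rcases lt_trichotomy (i : ℕ) (j : ℕ) with h | h | h
  · exact key i j h hij
  · exact absurd (Fin.ext h) hne
  · exact key j i h hij.symm

/-- A weakly acyclic automaton over `{a,b,c}` with `n` states has a
synchronizing word in the language `(a+b)*cc*` iff there is some `0 ≤ i ≤ n`
such that `δ(R, c^(i+1))` is a singleton, where
`R = {q | δ(q,a) = q ∧ δ(q,b) = q}`. -/
theorem sync_constraint_abStar_c_cStar {Q : Type*} [Fintype Q] [Nonempty Q]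
    (δ : Q → ABC → Q) (hwa : WeaklyAcyclic δ) :
    (∃ (u : List ABC) (j : ℕ), 1 ≤ j ∧ (∀ x ∈ u, x = ABC.a ∨ x = ABC.b) ∧
        ∃ q : Q, ∀ p : Q,
          deltaStar δ p (u ++ List.replicate j ABC.c) = q) ↔
      ∃ i ≤ Fintype.card Q, ∃ q : Q,
        (fun r => deltaStar δ r (List.replicate (i + 1) ABC.c)) ''
          {p : Q | δ p ABC.a = p ∧ δ p ABC.b = p} = {q} := by
  set n := Fintype.card Q with hn
  set g : Q → Q := fun q => δ q ABC.c with hgdef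
  set h : Q → Q := fun q => δ (δ q ABC.a) ABC.b with hhdef
  -- cycles of g force fixed points
  have hgc : ∀ q k, 1 ≤ k → g^[k] q = q → g q = q := by
    intro q k hk heq
    have hds : deltaStar δ q (List.replicate k ABC.c) = q := by
      rw [deltaStar_replicate]; exact heq
    exact hwa q _ (by
      intro hnil; have := congrArg List.length hnil; simp at this; omega) hds ABC.c
      (List.mem_replicate.mpr ⟨by omega, rfl⟩)
  -- fixed points of h are in R
  have hRfix : ∀ q, h q = q → δ q ABC.a = q ∧ δ q ABC.b = q := by
    intro q hq
    have hds : deltaStar δ q [ABC.a, ABC.b] = q := hq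
    have := hwa q [ABC.a, ABC.b] (by simp) hds
    exact ⟨this ABC.a (by simp), this ABC.b (by simp)⟩
  -- cycles of h force fixed points
  have hhc : ∀ q k, 1 ≤ k → h^[k] q = q → h q = q := by
    intro q k hk heq
    obtain ⟨k, rfl⟩ : ∃ m, k = m + 1 := ⟨k - 1, by omega⟩
    have hds : deltaStar δ q (abWord (k + 1)) = q := by
      rw [deltaStar_abWord]; exact heq
    have := hwa q _ (by simp [abWord]) hds
    have ha : δ q ABC.a = q := this ABC.a (by simp [abWord])
    have hb : δ q ABC.b = q := this ABC.b (by simp [abWord])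
    show δ (δ q ABC.a) ABC.b = q
    rw [ha, hb]
  -- words over {a,b} fix R pointwise
  have hRword : ∀ r : Q, δ r ABC.a = r → δ r ABC.b = r →
      ∀ u : List ABC, (∀ x ∈ u, x = ABC.a ∨ x = ABC.b) → deltaStar δ r u = r := by
    intro r hra hrb u
    induction u with
    | nil => intro _; rfl
    | cons x u ih =>
      intro hmem
      have hx : δ r x = r := by
        rcases hmem x (by simp) with rfl | rfl
        · exact hra
        · exact hrb
      show deltaStar δ (δ r x) u = r
      rw [hx]
      exact ih fun y hy => hmem y (by simp [hy])
  -- every state reaches R via (ab)^n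
  have hreach : ∀ p : Q, δ (h^[n] p) ABC.a = h^[n] p ∧ δ (h^[n] p) ABC.b = h^[n] p :=
    fun p => hRfix _ (iterate_fix h hhc p)
  -- g stabilizes after n steps
  have hgstab : ∀ (p : Q) (m : ℕ), n ≤ m → g^[m] p = g^[n] p := by
    intro p m hm
    rw [show m = (m - n) + n by omega, Function.iterate_add_apply]
    exact Function.iterate_fixed (iterate_fix g hgc p) _
  constructor
  · rintro ⟨u, j, hj, hu, q, hsync⟩
    refine ⟨n, le_refl _, g^[n] q, ?_⟩
    ext x
    simp only [Set.mem_image, Set.mem_setOf_eq, Set.mem_singleton_iff]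
    constructor
    · rintro ⟨r, ⟨hra, hrb⟩, rfl⟩
      have hgj : g^[j] r = q := by
        have := hsync r
        rw [deltaStar_append, hRword r hra hrb u hu, deltaStar_replicate] at this
        exact this
      rw [deltaStar_replicate]
      calc g^[n+1] r = g^[n] r := hgstab r (n+1) (by omega)
        _ = g^[n+j] r := (hgstab r (n+j) (by omega)).symm
        _ = g^[n] (g^[j] r) := by rw [Function.iterate_add_apply]
        _ = g^[n] q := by rw [hgj]
    · rintro rfl
      obtain ⟨p⟩ := ‹Nonempty Q›
      obtain ⟨hra, hrb⟩ := hreach p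
      refine ⟨h^[n] p, ⟨hra, hrb⟩, ?_⟩
      have hgj : g^[j] (h^[n] p) = q := by
        have := hsync (h^[n] p)
        rw [deltaStar_append, hRword _ hra hrb u hu, deltaStar_replicate] at this
        exact this
      rw [deltaStar_replicate]
      calc g^[n+1] (h^[n] p) = g^[n] (h^[n] p) := hgstab _ (n+1) (by omega)
        _ = g^[n+j] (h^[n] p) := (hgstab _ (n+j) (by omega)).symm
        _ = g^[n] (g^[j] (h^[n] p)) := by rw [Function.iterate_add_apply]
        _ = g^[n] q := by rw [hgj]
  · rintro ⟨i, hi, q, himg⟩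
    refine ⟨abWord n, i + 1, by omega, abWord_mem n, q, ?_⟩
    intro p
    rw [deltaStar_append, deltaStar_abWord]
    obtain ⟨hra, hrb⟩ := hreach p
    have : deltaStar δ (h^[n] p) (List.replicate (i + 1) ABC.c) ∈
        (fun r => deltaStar δ r (List.replicate (i + 1) ABC.c)) ''
          {p : Q | δ p ABC.a = p ∧ δ p ABC.b = p} :=
      ⟨h^[n] p, ⟨hra, hrb⟩, rfl⟩
    rw [himg] at this
    exact this
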